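/- arXiv:1503.01276 — 2 statements merged into one kernel-verified Lean document; each statement's English description precedes it below -/
import Mathlib

section
/- The integral (4/π)∫₀^∞ k²·(π/(2k))·(1 − tanh(πk)) dk equals 1/12. -/
open MeasureTheory Real

lemma hasSum_alt_inv_sq : HasSum (fun n : ℕ => (-1:ℝ)^n / ((n:ℝ)+1)^2) (π^2/12) := by
  have hz : HasSum (fun n : ℕ => (1:ℝ) / (n:ℝ)^2) (π^2/6) := hasSum_zeta_two
  have hinj : Function.Injective (fun n : ℕ => 2 * n) := fun a b h => by
    simp only [] at h; omega
  -- even part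
  have he : HasSum (fun n : ℕ => (2:ℝ) * (if Even n then 1 / (n:ℝ)^2 else 0)) (π^2/12) := by
    have h2 : HasSum (fun n : ℕ => (1/2:ℝ) * (1/(n:ℝ)^2)) (π^2/12) := by
      have := hz.mul_left (1/2 : ℝ)
      convert this using 1
      rfl
      ring
    rw [← Function.Injective.hasSum_iff hinj ?_]
    · have hceq : ((fun n : ℕ => (2:ℝ) * (if Even n then 1 / (n:ℝ)^2 else 0)) ∘ (fun n => 2 * n))
        = fun n : ℕ => (1/2:ℝ) * (1/(n:ℝ)^2) := by
        funext n
        simp only [Function.comp]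
        rw [if_pos ⟨n, by ring⟩]
        rcases eq_or_ne (n:ℝ) 0 with h | h
        · push_cast; rw [h]; norm_num
        · push_cast; field_simp
      rw [hceq]; exact h2
    · intro n hn
      rw [if_neg, mul_zero]
      rintro ⟨m, hm⟩; exact hn ⟨m, by simp only []; omega⟩
  have hsub : HasSum (fun n : ℕ => (1:ℝ)/(n:ℝ)^2 - 2 * (if Even n then 1/(n:ℝ)^2 else 0))
      (π^2/12) := by
    have := hz.sub he
    convert this using 1
    rfl
    ring
  have hfun : ∀ n : ℕ, (-1:ℝ)^(n+1) / ((n:ℝ))^2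
      = 1/(n:ℝ)^2 - 2 * (if Even n then 1/(n:ℝ)^2 else 0) := by
    intro n
    rcases Nat.even_or_odd n with h | h
    · rw [if_pos h, pow_succ, h.neg_one_pow]; ring
    · rw [if_neg (Nat.not_even_iff_odd.mpr h), pow_succ, h.neg_one_pow]; ring
  have hkey : HasSum (fun n : ℕ => (-1:ℝ)^(n+1) / ((n:ℝ))^2) (π^2/12) := by
    rw [funext hfun]; exact hsub
  have h1 := (hasSum_nat_add_iff' (f := fun n : ℕ => (-1:ℝ)^(n+1) / ((n:ℝ))^2) 1).mpr
    (by simpa using hkey)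
  have heq2 : (fun n : ℕ => (-1:ℝ)^(n+1+1) / ((n:ℝ)+1)^2)
      = fun n : ℕ => (-1:ℝ)^n / ((n:ℝ)+1)^2 := by
    funext n; rw [pow_succ, pow_succ]; ring
  rw [← heq2]
  simpa using h1

lemma integral_aux (n : ℕ) :
    ∫ k in Set.Ioi (0:ℝ), 4 * k * Real.exp (-(2 * π * ((n:ℝ)+1) * k)) =
      1 / (π^2 * ((n:ℝ)+1)^2) := by
  have hr : 0 < 2 * π * ((n:ℝ)+1) := by positivity
  have h2 : ∫ t in Set.Ioi (0:ℝ), t ^ ((2:ℝ)-1) * Real.exp (-(2 * π * ((n:ℝ)+1) * t)) =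
      (1 / (2 * π * ((n:ℝ)+1))) ^ (2:ℝ) * Real.Gamma 2 :=
    integral_rpow_mul_exp_neg_mul_Ioi (by norm_num) hr
  have h3 : ∫ t in Set.Ioi (0:ℝ), t * Real.exp (-(2 * π * ((n:ℝ)+1) * t)) =
      (1 / (2 * π * ((n:ℝ)+1))) ^ (2:ℝ) * Real.Gamma 2 := by
    rw [← h2]
    refine setIntegral_congr_fun measurableSet_Ioi (fun t _ => ?_)
    norm_num
  rw [show (fun k : ℝ => 4 * k * Real.exp (-(2 * π * ((n:ℝ)+1) * k))) =
      (fun k : ℝ => 4 * (k * Real.exp (-(2 * π * ((n:ℝ)+1) * k)))) by funext k; ring]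
  rw [integral_const_mul, h3, Real.Gamma_two, Real.rpow_two]
  have hπ : (π:ℝ) ≠ 0 := Real.pi_ne_zero
  have hn1 : ((n:ℝ)+1) ≠ 0 := by positivity
  field_simp
  ring

lemma integrable_aux (n : ℕ) :
    IntegrableOn (fun k : ℝ => 4 * k * Real.exp (-(2 * π * ((n:ℝ)+1) * k))) (Set.Ioi 0) := by
  have hb : (0:ℝ) < 2 * π * ((n:ℝ)+1) := by positivity
  have h := integrableOn_rpow_mul_exp_neg_mul_rpow (p := 1) (s := 1)
    (b := 2 * π * ((n:ℝ)+1)) (by norm_num) (by norm_num) hb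
  simp only [Real.rpow_one, neg_mul] at h
  have h2 := h.const_mul (4:ℝ)
  simpa only [mul_assoc, IntegrableOn] using h2

theorem stmt0 :
    ∫ k in Set.Ioi (0:ℝ), (4 / π) * (k ^ 2 * (π / (2 * k)) * (1 - Real.tanh (π * k))) = 1 / 12 := by
  set μ := volume.restrict (Set.Ioi (0:ℝ)) with hμ
  set F : ℕ → ℝ → ℝ := fun n k => (-1:ℝ)^n * (4 * k * Real.exp (-(2 * π * ((n:ℝ)+1) * k))) with hF
  have hint : ∀ n, Integrable (F n) μ := fun n => ((integrable_aux n).const_mul _)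
  have hFint : ∀ n, ∫ k, F n k ∂μ = (-1:ℝ)^n * (1 / (π^2 * ((n:ℝ)+1)^2)) := by
    intro n
    rw [hF]
    simp only
    rw [integral_const_mul, hμ, integral_aux]
  have hnorm : ∀ n, ∫ k, ‖F n k‖ ∂μ = 1 / (π^2 * ((n:ℝ)+1)^2) := by
    intro n
    rw [hμ, ← integral_aux n]
    refine setIntegral_congr_fun measurableSet_Ioi (fun k hk => ?_)
    have hk0 : (0:ℝ) < k := hk
    rw [hF]
    simp only [norm_mul, norm_pow, norm_neg, norm_one, one_pow, one_mul]
    rw [Real.norm_of_nonneg hk0.le, Real.norm_of_nonneg (Real.exp_pos _).le]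
    norm_num
  have hsummable : Summable fun n => ∫ k, ‖F n k‖ ∂μ := by
    simp_rw [hnorm]
    have hs : Summable (fun n : ℕ => (1:ℝ)/((n:ℝ)+1)^2) := by
      have := (summable_nat_add_iff (f := fun n : ℕ => (1:ℝ)/(n:ℝ)^2) 1).mpr
        hasSum_zeta_two.summable
      exact this.congr (fun n => by push_cast; ring)
    exact (hs.mul_left (1/π^2)).congr (fun n => by
      have hπ : (π:ℝ) ≠ 0 := Real.pi_ne_zero
      have hn1 : ((n:ℝ)+1) ≠ 0 := by positivity
      field_simp)
  have hswap := integral_tsum_of_summable_integral_norm hint hsummable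
  have hsum : ∑' n, ∫ k, F n k ∂μ = 1/12 := by
    simp_rw [hFint]
    have hπ : (π:ℝ) ≠ 0 := Real.pi_ne_zero
    have hfe : (fun n : ℕ => (-1:ℝ)^n * (1 / (π^2 * ((n:ℝ)+1)^2)))
        = fun n : ℕ => (1:ℝ)/π^2 * ((-1:ℝ)^n / ((n:ℝ)+1)^2) := by
      funext n
      have hn1 : ((n:ℝ)+1) ≠ 0 := by positivity
      field_simp
    have h12 : (1:ℝ)/π^2 * (π^2/12) = 1/12 := by field_simp
    rw [hfe]
    have := hasSum_alt_inv_sq.mul_left ((1:ℝ)/π^2)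
    rw [h12] at this
    exact this.tsum_eq
  have hcongr : ∫ k, (∑' n, F n k) ∂μ =
      ∫ k in Set.Ioi (0:ℝ), (4 / π) * (k ^ 2 * (π / (2 * k)) * (1 - Real.tanh (π * k))) := by
    rw [hμ]
    refine setIntegral_congr_fun measurableSet_Ioi (fun k hk => ?_)
    have hk0 : (0:ℝ) < k := hk
    have hu : ‖(-Real.exp (-(2 * π * k)))‖ < 1 := by
      rw [Real.norm_eq_abs, abs_neg, abs_of_pos (Real.exp_pos _)]
      refine Real.exp_lt_one_iff.mpr (neg_lt_zero.mpr (by positivity))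
    have hgeo := hasSum_geometric_of_norm_lt_one hu
    have hgeo2 := hgeo.mul_left (4 * k * Real.exp (-(2 * π * k)))
    have heq : (fun n : ℕ => 4 * k * Real.exp (-(2 * π * k)) * (-Real.exp (-(2 * π * k)))^n)
        = fun n => F n k := by
      funext n
      rw [hF]
      simp only
      rw [neg_pow, ← Real.exp_nat_mul]
      rw [show -(2 * π * ((n:ℝ)+1) * k) = -(2 * π * k) + (n:ℝ) * -(2 * π * k) by ring,
        Real.exp_add]
      ring
    rw [heq] at hgeo2
    rw [hgeo2.tsum_eq]
    have he2 : Real.exp (-(π * k)) > 0 := Real.exp_pos _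
    have he : Real.exp (π * k) > 0 := Real.exp_pos _
    have hee : Real.exp (π * k) * Real.exp (-(π * k)) = 1 := by
      rw [← Real.exp_add]; simp
    have hexp : Real.exp (-(2 * π * k)) = Real.exp (-(π * k)) * Real.exp (-(π * k)) := by
      rw [← Real.exp_add]; ring_nf
    have hden : (0:ℝ) < 1 + Real.exp (-(π * k)) * Real.exp (-(π * k)) := by positivity
    rw [Real.tanh_eq_sinh_div_cosh, Real.sinh_eq, Real.cosh_eq, hexp]
    have hc2 : (0:ℝ) < Real.exp (π * k) + Real.exp (-(π * k)) := by positivity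
    rw [sub_neg_eq_add]
    field_simp
    rw [mul_comm k π]
    linear_combination (2 * Real.exp (-(π * k))) * hee
  rw [← hcongr, ← hswap, hsum]
end

section
/- For each ν ∈ ℕ, ν ≥ 1, the function φ_ν(z) = √(sin(πz)/π)·P_{ν−1}(cos(πz)) on (0,1) satisfies −φ_ν''(z) − (π²/(4 sin²(πz)))·φ_ν(z) = π²(ν − 1/2)²·φ_ν(z) for all z ∈ (0,1). -/
open Real Polynomial

/-- The n-th Legendre polynomial (Rodrigues' formula). -/
noncomputable def legendreP (n : ℕ) : Polynomial ℝ :=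
  Polynomial.C (1 / (2 ^ n * n.factorial : ℝ)) * (Polynomial.derivative^[n] ((X ^ 2 - 1) ^ n))



lemma leibX (m : ℕ) (q : ℝ[X]) :
    derivative^[m+1] (X * q) = X * derivative^[m+1] q + C ((m:ℝ)+1) * derivative^[m] q := by
  induction m generalizing q with
  | zero => simp [derivative_mul]; ring
  | succ m ih =>
    rw [Function.iterate_succ_apply' derivative (m+1) (X*q), ih,
      Function.iterate_succ_apply' derivative (m+1) q,
      Function.iterate_succ_apply' derivative m q]
    simp [derivative_mul, map_ofNat]
    ring

lemma leib2 (m : ℕ) (q : ℝ[X]) :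
    derivative^[m+1] ((X^2 - 1) * derivative q)
      = (X^2-1) * derivative^[m+2] q + C (2*((m:ℝ)+1)) * (X * derivative^[m+1] q)
        + C (((m:ℝ)+1)*m) * derivative^[m] q := by
  induction m generalizing q with
  | zero => simp [derivative_mul, map_ofNat]; ring
  | succ m ih =>
    rw [Function.iterate_succ_apply' derivative (m+1) ((X^2-1) * derivative q), ih,
      Function.iterate_succ_apply' derivative (m+2) q,
      Function.iterate_succ_apply' derivative (m+1) q,
      Function.iterate_succ_apply' derivative m q]
    simp [derivative_mul, map_ofNat]
    ring

lemma rodrigues_base (n : ℕ) :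
    (X^2 - 1) * derivative ((X^2-1)^n : ℝ[X]) = C (2*(n:ℝ)) * (X * (X^2-1)^n) := by
  cases n with
  | zero => simp
  | succ n =>
    rw [derivative_pow]
    simp [derivative_mul, map_ofNat]
    ring


lemma iterate_C_mul (m : ℕ) (a : ℝ) (p : ℝ[X]) :
    derivative^[m] (C a * p) = C a * derivative^[m] p := by
  induction m generalizing p with
  | zero => rfl
  | succ m ih => rw [Function.iterate_succ_apply, derivative_C_mul, ih, Function.iterate_succ_apply]

lemma pre_ode (n : ℕ) :
    (X^2 - 1) * derivative (derivative (derivative^[n] ((X^2-1)^n : ℝ[X])))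
      + C 2 * (X * derivative (derivative^[n] ((X^2-1)^n : ℝ[X])))
      = C ((n:ℝ)*(n+1)) * derivative^[n] ((X^2-1)^n : ℝ[X]) := by
  have h := congrArg (derivative^[n+1]) (rodrigues_base n)
  rw [leib2 n ((X^2-1)^n), iterate_C_mul, leibX n ((X^2-1)^n)] at h
  have e1 : derivative^[n+2] ((X^2-1)^n : ℝ[X])
      = derivative (derivative (derivative^[n] ((X^2-1)^n : ℝ[X]))) := by
    rw [show n+2 = n+1+1 from rfl, Function.iterate_succ_apply' derivative (n+1),
      Function.iterate_succ_apply' derivative n]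
  have e2 : derivative^[n+1] ((X^2-1)^n : ℝ[X])
      = derivative (derivative^[n] ((X^2-1)^n : ℝ[X])) :=
    Function.iterate_succ_apply' derivative n _
  rw [e1, e2] at h
  simp only [C_mul, C_add, C_1, map_ofNat] at h ⊢
  linear_combination h

lemma legendre_ode (n : ℕ) :
    (X^2 - 1) * derivative (derivative (legendreP n)) + C 2 * (X * derivative (legendreP n))
      = C ((n:ℝ)*(n+1)) * legendreP n := by
  unfold legendreP
  rw [derivative_C_mul, derivative_C_mul]
  linear_combination C (1 / (2 ^ n * n.factorial : ℝ)) * pre_ode n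


lemma hasDerivAt_linear (x : ℝ) : HasDerivAt (fun y : ℝ => π * y) π x := by
  simpa using (hasDerivAt_id x).const_mul π

lemma hasDerivAt_inner (x : ℝ) :
    HasDerivAt (fun y => Real.sin (π*y)/π) (Real.cos (π*x)) x := by
  have h2 := ((Real.hasDerivAt_sin (π*x)).comp x (hasDerivAt_linear x)).div_const π
  refine h2.congr_deriv ?_
  have : (π:ℝ) ≠ 0 := Real.pi_ne_zero
  field_simp

lemma hasDerivAt_u (x : ℝ) (hx : 0 < Real.sin (π*x)) :
    HasDerivAt (fun y => Real.sqrt (Real.sin (π*y)/π))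
      (Real.cos (π*x) / (2*Real.sqrt (Real.sin (π*x)/π))) x :=
  (hasDerivAt_inner x).sqrt (ne_of_gt (by positivity))

lemma hasDerivAt_cos' (x : ℝ) :
    HasDerivAt (fun y => Real.cos (π*y)) (-(π * Real.sin (π*x))) x := by
  have := (Real.hasDerivAt_cos (π*x)).comp x (hasDerivAt_linear x)
  refine this.congr_deriv ?_
  ring

lemma hasDerivAt_evalP (p : Polynomial ℝ) (x : ℝ) :
    HasDerivAt (fun y => p.eval (Real.cos (π*y)))
      (p.derivative.eval (Real.cos (π*x)) * (-(π * Real.sin (π*x)))) x :=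
  (p.hasDerivAt _).comp x (hasDerivAt_cos' x)

lemma phase1 (p : Polynomial ℝ) (x : ℝ) (hx : 0 < Real.sin (π*x)) :
    HasDerivAt (fun y => Real.sqrt (Real.sin (π*y)/π) * p.eval (Real.cos (π*y)))
      (Real.cos (π*x) / (2*Real.sqrt (Real.sin (π*x)/π)) * p.eval (Real.cos (π*x))
        + Real.sqrt (Real.sin (π*x)/π) * (p.derivative.eval (Real.cos (π*x)) * (-(π * Real.sin (π*x))))) x :=
  (hasDerivAt_u x hx).mul (hasDerivAt_evalP p x)

-- second derivative pieces
lemma phase2 (p : Polynomial ℝ) (x : ℝ) (hx : 0 < Real.sin (π*x)) :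
    HasDerivAt (fun y => Real.cos (π*y) / (2*Real.sqrt (Real.sin (π*y)/π)) * p.eval (Real.cos (π*y))
        + Real.sqrt (Real.sin (π*y)/π) * (p.derivative.eval (Real.cos (π*y)) * (-(π * Real.sin (π*y)))))
      ((((-(π * Real.sin (π*x))) * (2*Real.sqrt (Real.sin (π*x)/π))
          - Real.cos (π*x) * (2 * (Real.cos (π*x) / (2*Real.sqrt (Real.sin (π*x)/π)))))
          / (2*Real.sqrt (Real.sin (π*x)/π))^2) * p.eval (Real.cos (π*x))
        + Real.cos (π*x) / (2*Real.sqrt (Real.sin (π*x)/π))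
            * (p.derivative.eval (Real.cos (π*x)) * (-(π * Real.sin (π*x))))
        + ((Real.cos (π*x) / (2*Real.sqrt (Real.sin (π*x)/π)))
              * (p.derivative.eval (Real.cos (π*x)) * (-(π * Real.sin (π*x))))
          + Real.sqrt (Real.sin (π*x)/π)
              * ((derivative (derivative p)).eval (Real.cos (π*x)) * (-(π * Real.sin (π*x)))
                  * (-(π * Real.sin (π*x)))
                + p.derivative.eval (Real.cos (π*x)) * (-(π * (Real.cos (π*x) * π)))))) x := by
  have hu : Real.sqrt (Real.sin (π*x)/π) ≠ 0 := by positivity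
  have h1 : HasDerivAt (fun y => Real.cos (π*y) / (2*Real.sqrt (Real.sin (π*y)/π)))
      ((((-(π * Real.sin (π*x))) * (2*Real.sqrt (Real.sin (π*x)/π))
          - Real.cos (π*x) * (2 * (Real.cos (π*x) / (2*Real.sqrt (Real.sin (π*x)/π)))))
          / (2*Real.sqrt (Real.sin (π*x)/π))^2)) x :=
    (hasDerivAt_cos' x).div ((hasDerivAt_u x hx).const_mul 2) (by positivity)
  have h2 : HasDerivAt (fun y => -(π * Real.sin (π*y))) (-(π * (Real.cos (π*x) * π))) x := by
    exact (((Real.hasDerivAt_sin (π*x)).comp x (hasDerivAt_linear x)).const_mul π).neg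
  have h3 : HasDerivAt (fun y => p.derivative.eval (Real.cos (π*y)) * (-(π * Real.sin (π*y))))
      ((derivative (derivative p)).eval (Real.cos (π*x)) * (-(π * Real.sin (π*x))) * (-(π * Real.sin (π*x)))
        + p.derivative.eval (Real.cos (π*x)) * (-(π * (Real.cos (π*x) * π)))) x :=
    (hasDerivAt_evalP p.derivative x).mul h2
  exact (h1.mul (p.hasDerivAt _ |>.comp x (hasDerivAt_cos' x))).add ((hasDerivAt_u x hx).mul h3)

lemma keyalg (q u c P0 A B nr : ℝ) (hq : 0 < q) (hu : 0 < u)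
    (ode : (c^2-1)*B + 2*c*A = (nr*(nr+1))*P0)
    (pyth : (q*u^2)^2 + c^2 = 1) :
    -(((-(q * (q*u^2))) * (2*u) - c * (2 * (c / (2*u)))) / (2*u)^2 * P0
        + c / (2*u) * (A * (-(q * (q*u^2))))
        + (c / (2*u) * (A * (-(q * (q*u^2))))
          + u * (B * (-(q * (q*u^2))) * (-(q * (q*u^2)))
            + A * (-(q * (c*q))))))
      - q^2 / (4 * (q*u^2)^2) * (u * P0)
      = q^2 * (nr + 1/2)^2 * (u * P0) := by
  have h1 : u ≠ 0 := ne_of_gt hu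
  have h2 : q ≠ 0 := ne_of_gt hq
  have hc2 : c^2 = 1 - q^2*u^4 := by linear_combination pyth
  have hB : q^2*u^4*B = 2*c*A - nr*(nr+1)*P0 := by linear_combination B * hc2 - ode
  field_simp
  linear_combination (4*P0) * hc2 - (16*q^2*u^4) * hB


theorem stmt5 (ν : ℕ) (hν : 1 ≤ ν) (φ : ℝ → ℝ)
    (hφ : ∀ x : ℝ, φ x = Real.sqrt (Real.sin (π * x) / π) * (legendreP (ν - 1)).eval (Real.cos (π * x)))
    (z : ℝ) (hz : z ∈ Set.Ioo (0:ℝ) 1) :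
    -(deriv (deriv φ) z) - (π ^ 2 / (4 * Real.sin (π * z) ^ 2)) * φ z
      = π ^ 2 * ((ν : ℝ) - 1 / 2) ^ 2 * φ z := by
  have hπ : (0:ℝ) < π := Real.pi_pos
  have hsin : ∀ x ∈ Set.Ioo (0:ℝ) 1, 0 < Real.sin (π*x) := by
    intro x hx
    apply Real.sin_pos_of_pos_of_lt_pi
    · have := hx.1; positivity
    · nlinarith [hx.2]
  have hφf : φ = fun x => Real.sqrt (Real.sin (π * x) / π) * (legendreP (ν-1)).eval (Real.cos (π * x)) :=
    funext hφ
  have hG : ∀ x ∈ Set.Ioo (0:ℝ) 1, HasDerivAt φ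
      (Real.cos (π*x) / (2*Real.sqrt (Real.sin (π*x)/π)) * (legendreP (ν-1)).eval (Real.cos (π*x))
        + Real.sqrt (Real.sin (π*x)/π) * ((legendreP (ν-1)).derivative.eval (Real.cos (π*x)) * (-(π * Real.sin (π*x))))) x := by
    intro x hx
    have := phase1 (legendreP (ν-1)) x (hsin x hx)
    rwa [← hφf] at this
  have hev : deriv φ =ᶠ[nhds z]
      (fun x => Real.cos (π*x) / (2*Real.sqrt (Real.sin (π*x)/π)) * (legendreP (ν-1)).eval (Real.cos (π*x))
        + Real.sqrt (Real.sin (π*x)/π) * ((legendreP (ν-1)).derivative.eval (Real.cos (π*x)) * (-(π * Real.sin (π*x))))) := by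
    filter_upwards [isOpen_Ioo.mem_nhds hz] with x hx
    exact (hG x hx).deriv
  have h2 : deriv (deriv φ) z = _ := hev.deriv_eq.trans (phase2 (legendreP (ν-1)) z (hsin z hz)).deriv
  rw [h2, hφ z]
  have hspos := hsin z hz
  have hu0 : 0 < Real.sqrt (Real.sin (π*z)/π) := Real.sqrt_pos.2 (by positivity)
  set u := Real.sqrt (Real.sin (π*z)/π) with hu_def
  have hsu : Real.sin (π*z) = π * u^2 := by
    rw [hu_def, Real.sq_sqrt (by positivity : (0:ℝ) ≤ Real.sin (π*z)/π)]
    field_simp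
  have pyth : (π*u^2)^2 + (Real.cos (π*z))^2 = 1 := by
    rw [← hsu]; exact Real.sin_sq_add_cos_sq _
  have ode0 := congrArg (Polynomial.eval (Real.cos (π*z))) (legendre_ode (ν-1))
  simp only [eval_add, eval_mul, eval_sub, eval_pow, eval_X, eval_one, eval_C] at ode0
  rw [Nat.cast_sub hν, Nat.cast_one] at ode0
  have ode : ((Real.cos (π*z))^2-1) * (derivative (derivative (legendreP (ν-1)))).eval (Real.cos (π*z))
      + 2 * Real.cos (π*z) * (derivative (legendreP (ν-1))).eval (Real.cos (π*z))
      = (((ν:ℝ)-1)*(((ν:ℝ)-1)+1)) * (legendreP (ν-1)).eval (Real.cos (π*z)) := by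
    linear_combination ode0
  rw [hsu]
  have key := keyalg π u (Real.cos (π*z)) ((legendreP (ν-1)).eval (Real.cos (π*z)))
    ((derivative (legendreP (ν-1))).eval (Real.cos (π*z)))
    ((derivative (derivative (legendreP (ν-1)))).eval (Real.cos (π*z)))
    ((ν:ℝ)-1) hπ hu0 ode pyth
  linear_combination key
end
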